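/- Full OOD generalization bound: under the assumptions of the preceding statements (finite hypothesis class Π of policies, finite GMDP, rewards in [0,R_max], surrogate expert π̂_E, m i.i.d. training samples from training distribution S), with probability at least 1 − δ, SubOpt(π_E, π) ≤ (2R_max/(1−γ)²)·[ ε̂^S(π̂_E, π) + ε^S(π̂_E, π_E) + d1(T, S) + sqrt((log(2|Π|) + log(1/δ))/(2m)) ], where ε̂^S is the empirical expectation over the m samples of the TV distance, ε^S is the population expectation of TV under S, and d1 is the variation divergence between the initial state-goal distributions T and S. -/

import Mathlib

/-- Variation divergence: `d1(P,Q) = 2 · sup_{J ⊆ X} |∑_{x∈J} (P x − Q x)|`. -/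
noncomputable def d1 {X : Type*} [Fintype X] (P Q : X → ℝ) : ℝ :=
  2 * ((Finset.univ : Finset X).powerset.sup'
    ⟨∅, Finset.empty_mem_powerset _⟩
    fun J => |∑ x ∈ J, (P x - Q x)|)

/-- State distribution at time `t` of the Markov chain induced by policy `π` and
transition kernel `P` starting at `s0`. -/
noncomputable def stateDist {S A : Type*} [Fintype S] [Fintype A] [DecidableEq S]
    (P : S → A → S → ℝ) (π : S → A → ℝ) (s0 : S) : ℕ → S → ℝ
  | 0, s => if s = s0 then 1 else 0
  | (t + 1), s => ∑ s' : S, ∑ a : A, stateDist P π s0 t s' * π s' a * P s' a s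

/-- Expected discounted return of a goal-conditioned policy from `(s0, g)`. -/
noncomputable def goalValue {S G A : Type*} [Fintype S] [Fintype A] [DecidableEq S]
    (P : S → A → S → ℝ) (r : S → A → G → ℝ) (γ : ℝ)
    (π : S → G → A → ℝ) (s0 : S) (g : G) : ℝ :=
  ∑' t : ℕ, γ ^ t * ∑ s, ∑ a, stateDist P (fun s' a => π s' g a) s0 t s * π s g a * r s a g

/-- Discounted state occupancy of policy `π` conditioned on goal `g`, from `s0`. -/
noncomputable def goalOcc {S G A : Type*} [Fintype S] [Fintype A] [DecidableEq S]
    (P : S → A → S → ℝ) (γ : ℝ) (π : S → G → A → ℝ) (s0 : S) (g : G) (s : S) : ℝ :=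
  (1 - γ) * ∑' t : ℕ, γ ^ t * stateDist P (fun s' a => π s' g a) s0 t s

/-- Expected (under the expert's occupancy from `(s0,g)`) total variation between two
goal-conditioned policies, as a function of the initial state-goal pair. -/
noncomputable def tvLoss {S G A : Type*} [Fintype S] [Fintype G] [Fintype A] [DecidableEq S]
    (P : S → A → S → ℝ) (γ : ℝ) (πE π1 π2 : S → G → A → ℝ) (p : S × G) : ℝ :=
  ∑ s, goalOcc P γ πE p.1 p.2 s * ((1 / 2) * ∑ a, |π1 s p.2 a - π2 s p.2 a|)

private noncomputable def hfD (p l : ℝ) : ℝ := 1 - p + p * Real.exp l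
private noncomputable def hfG (p l : ℝ) : ℝ := l ^ 2 / 8 + p * l - Real.log (hfD p l)
private noncomputable def hfG' (p l : ℝ) : ℝ := l / 4 + p - p * Real.exp l / hfD p l

lemma hfD_pos {p : ℝ} (hp0 : 0 ≤ p) (hp1 : p ≤ 1) (l : ℝ) : 0 < hfD p l := by
  unfold hfD
  rcases le_or_gt 1 (Real.exp l) with h | h
  · nlinarith
  · nlinarith [Real.exp_pos l]

lemma hfG'_hasDeriv {p : ℝ} (hp0 : 0 ≤ p) (hp1 : p ≤ 1) (l : ℝ) :
    HasDerivAt (hfG p) (hfG' p l) l := by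
  have hD := hfD_pos hp0 hp1 l
  have h1 : HasDerivAt (fun x : ℝ => x ^ 2 / 8) (l / 4) l := by
    have := (hasDerivAt_pow 2 l).div_const 8
    refine this.congr_deriv ?_; norm_num; ring
  have h2 : HasDerivAt (fun x : ℝ => p * x) p l := by
    simpa using (hasDerivAt_id l).const_mul p
  have hDd : HasDerivAt (hfD p) (p * Real.exp l) l := by
    have := ((Real.hasDerivAt_exp l).const_mul p).const_add (1 - p)
    exact this
  have h3 : HasDerivAt (fun x => Real.log (hfD p x)) (p * Real.exp l / hfD p l) l :=
    hDd.log hD.ne'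
  have := (h1.add h2).sub h3
  exact this

lemma hfG''_nonneg {p : ℝ} (hp0 : 0 ≤ p) (hp1 : p ≤ 1) (l : ℝ) :
    HasDerivAt (hfG' p) (1 / 4 - p * (1 - p) * Real.exp l / (hfD p l) ^ 2) l := by
  have hD := hfD_pos hp0 hp1 l
  have h1 : HasDerivAt (fun x : ℝ => x / 4 + p) (1 / 4) l := by
    simpa using ((hasDerivAt_id l).div_const 4).add_const p
  have hNum : HasDerivAt (fun x => p * Real.exp x) (p * Real.exp l) l :=
    (Real.hasDerivAt_exp l).const_mul p
  have hDd : HasDerivAt (hfD p) (p * Real.exp l) l := by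
    have := ((Real.hasDerivAt_exp l).const_mul p).const_add (1 - p)
    exact this
  have h2 : HasDerivAt (fun x => p * Real.exp x / hfD p x)
      ((p * Real.exp l * hfD p l - p * Real.exp l * (p * Real.exp l)) / (hfD p l) ^ 2) l :=
    hNum.div hDd hD.ne'
  have := h1.sub h2
  refine this.congr_deriv ?_
  unfold hfD
  field_simp
  ring

lemma hfG_nonneg {p : ℝ} (hp0 : 0 ≤ p) (hp1 : p ≤ 1) {l : ℝ} (hl : 0 ≤ l) :
    0 ≤ hfG p l := by
  have hmono' : Monotone (hfG' p) := by
    apply monotone_of_deriv_nonneg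
    · intro x; exact (hfG''_nonneg hp0 hp1 x).differentiableAt
    · intro x
      rw [(hfG''_nonneg hp0 hp1 x).deriv]
      have hD := hfD_pos hp0 hp1 x
      have : p * (1 - p) * Real.exp x / (hfD p x) ^ 2 ≤ 1 / 4 := by
        rw [div_le_iff₀ (by positivity)]
        unfold hfD
        nlinarith [sq_nonneg (1 - p - p * Real.exp x), Real.exp_pos x]
      linarith
  have hG'0 : hfG' p 0 = 0 := by simp [hfG', hfD]
  have hG'nonneg : ∀ x ∈ interior (Set.Ici (0:ℝ)), 0 ≤ deriv (hfG p) x := by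
    intro x hx
    rw [(hfG'_hasDeriv hp0 hp1 x).deriv]
    rw [interior_Ici] at hx
    have := hmono' (le_of_lt hx)
    rw [hG'0] at this; exact this
  have hGmono : MonotoneOn (hfG p) (Set.Ici 0) := by
    apply monotoneOn_of_deriv_nonneg (convex_Ici 0)
    · exact fun x _ => (hfG'_hasDeriv hp0 hp1 x).differentiableAt.continuousAt.continuousWithinAt
    · intro x _; exact (hfG'_hasDeriv hp0 hp1 x).differentiableAt.differentiableWithinAt
    · exact hG'nonneg
  have h0 : hfG p 0 = 0 := by simp [hfG, hfD]
  have := hGmono (Set.self_mem_Ici) (Set.mem_Ici.mpr hl) hl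
  rw [h0] at this; exact this

/-- Hoeffding's lemma, two-point form. -/
lemma hoeffding_two_point {p l : ℝ} (hp0 : 0 ≤ p) (hp1 : p ≤ 1) (hl : 0 ≤ l) :
    (1 - p) * Real.exp (-p * l) + p * Real.exp ((1 - p) * l) ≤ Real.exp (l ^ 2 / 8) := by
  have hD := hfD_pos hp0 hp1 l
  have hG := hfG_nonneg hp0 hp1 hl
  have hlog : Real.log (hfD p l) ≤ l ^ 2 / 8 + p * l := by unfold hfG at hG; linarith
  have hDle : hfD p l ≤ Real.exp (l ^ 2 / 8 + p * l) := by
    rw [← Real.exp_log hD]; exact Real.exp_le_exp.mpr hlog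
  have key : Real.exp (-p * l) * hfD p l ≤ Real.exp (l ^ 2 / 8) := by
    calc Real.exp (-p * l) * hfD p l ≤ Real.exp (-p * l) * Real.exp (l ^ 2 / 8 + p * l) := by
          exact mul_le_mul_of_nonneg_left hDle (Real.exp_pos _).le
      _ = Real.exp (l ^ 2 / 8) := by rw [← Real.exp_add]; ring_nf
  calc (1 - p) * Real.exp (-p * l) + p * Real.exp ((1 - p) * l)
      = Real.exp (-p * l) * hfD p l := by
        unfold hfD
        rw [show (1 - p) * l = l + (-p * l) by ring, Real.exp_add]
        ring
    _ ≤ Real.exp (l ^ 2 / 8) := key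


/-- mgf bound for a `[0,1]`-valued variable on a finite weighted space. -/
lemma mgf_bound {X : Type*} [Fintype X] (w f : X → ℝ)
    (hw0 : ∀ x, 0 ≤ w x) (hw1 : ∑ x, w x = 1)
    (hf0 : ∀ x, 0 ≤ f x) (hf1 : ∀ x, f x ≤ 1) {l : ℝ} (hl : 0 ≤ l) :
    ∑ x, w x * Real.exp (l * ((∑ y, w y * f y) - f x)) ≤ Real.exp (l ^ 2 / 8) := by
  set μ := ∑ y, w y * f y with hμ
  have hμ0 : 0 ≤ μ := Finset.sum_nonneg fun y _ => mul_nonneg (hw0 y) (hf0 y)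
  have hμ1 : μ ≤ 1 := by
    rw [hμ, ← hw1]
    exact Finset.sum_le_sum fun y _ => by
      nlinarith [hw0 y, hf0 y, hf1 y]
  have hpt : ∀ x, Real.exp (l * (μ - f x)) ≤
      (1 - f x) * Real.exp (l * μ) + f x * Real.exp (l * (μ - 1)) := by
    intro x
    have := convexOn_exp.2 (Set.mem_univ (l * μ)) (Set.mem_univ (l * (μ - 1)))
      (by linarith [hf0 x, hf1 x] : (0:ℝ) ≤ 1 - f x) (hf0 x) (by ring)
    simpa [smul_eq_mul, show (1 - f x) * (l * μ) + f x * (l * (μ - 1)) = l * (μ - f x) by ring]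
      using this
  calc ∑ x, w x * Real.exp (l * (μ - f x))
      ≤ ∑ x, w x * ((1 - f x) * Real.exp (l * μ) + f x * Real.exp (l * (μ - 1))) :=
        Finset.sum_le_sum fun x _ => mul_le_mul_of_nonneg_left (hpt x) (hw0 x)
    _ = (1 - μ) * Real.exp (l * μ) + μ * Real.exp (l * (μ - 1)) := by
        simp only [mul_add, Finset.sum_add_distrib]
        rw [show (∑ x, w x * ((1 - f x) * Real.exp (l * μ)))
            = (∑ x, (w x - w x * f x)) * Real.exp (l * μ) by
          rw [Finset.sum_mul]; exact Finset.sum_congr rfl fun x _ => by ring]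
        rw [show (∑ x, w x * (f x * Real.exp (l * (μ - 1))))
            = (∑ x, w x * f x) * Real.exp (l * (μ - 1)) by
          rw [Finset.sum_mul]; exact Finset.sum_congr rfl fun x _ => by ring]
        rw [Finset.sum_sub_distrib, hw1, ← hμ]
    _ ≤ Real.exp (l ^ 2 / 8) := by
        have := hoeffding_two_point (p := 1 - μ) (l := l) (by linarith) (by linarith) hl
        calc (1 - μ) * Real.exp (l * μ) + μ * Real.exp (l * (μ - 1))
            = (1 - (1 - μ)) * Real.exp (-(1 - μ) * l) + (1 - μ) * Real.exp ((1 - (1 - μ)) * l)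
              + ((μ * Real.exp (l * (μ - 1)) + (1 - μ) * Real.exp (l * μ))
                - (μ * Real.exp (l * (μ - 1)) + (1 - μ) * Real.exp (l * μ))) := by
              rw [show -(1 - μ) * l = l * (μ - 1) by ring, show (1 - (1 - μ)) * l = l * μ by ring]
              ring
          _ = (1 - (1 - μ)) * Real.exp (-(1 - μ) * l) + (1 - μ) * Real.exp ((1 - (1 - μ)) * l) := by
              ring
          _ ≤ Real.exp (l ^ 2 / 8) := by
              have h2 := hoeffding_two_point (p := 1 - μ) (l := l) (by linarith) (by linarith) hl
              linarith [h2]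

/-- Chernoff bound on a finite product space. -/
lemma chernoff {X : Type*} [Fintype X] [DecidableEq X] (w f : X → ℝ)
    (hw0 : ∀ x, 0 ≤ w x) (hw1 : ∑ x, w x = 1)
    (hf0 : ∀ x, 0 ≤ f x) (hf1 : ∀ x, f x ≤ 1) (m : ℕ) {t : ℝ} (ht : 0 ≤ t)
    [DecidablePred fun ω : Fin m → X => (m : ℝ) * t ≤ ∑ i, ((∑ y, w y * f y) - f (ω i))] :
    ∑ ω : Fin m → X,
      (if (m : ℝ) * t ≤ ∑ i, ((∑ y, w y * f y) - f (ω i)) then ∏ i, w (ω i) else 0)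
      ≤ Real.exp (-(2 * m * t ^ 2)) := by
  set μ := ∑ y, w y * f y with hμ
  simp only [← hμ]
  set l : ℝ := 4 * t with hl
  have hl0 : 0 ≤ l := by positivity
  have step1 : ∀ ω : Fin m → X,
      (if (m : ℝ) * t ≤ ∑ i, (μ - f (ω i)) then ∏ i, w (ω i) else 0)
      ≤ Real.exp (-(l * m * t)) * ∏ i, (w (ω i) * Real.exp (l * (μ - f (ω i)))) := by
    intro ω
    have hW : 0 ≤ ∏ i, w (ω i) := Finset.prod_nonneg fun i _ => hw0 (ω i)
    have hrhs : Real.exp (-(l * m * t)) * ∏ i, (w (ω i) * Real.exp (l * (μ - f (ω i))))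
        = (∏ i, w (ω i)) * Real.exp (l * (∑ i, (μ - f (ω i))) - l * m * t) := by
      rw [Finset.prod_mul_distrib, ← Real.exp_sum]
      rw [show (∑ i, l * (μ - f (ω i))) = l * ∑ i, (μ - f (ω i)) by rw [Finset.mul_sum]]
      rw [mul_comm (Real.exp _), mul_assoc, ← Real.exp_add]
      ring_nf
    rw [hrhs]
    split_ifs with h
    · nth_rewrite 1 [show (∏ i, w (ω i)) = (∏ i, w (ω i)) * 1 by ring]
      apply mul_le_mul_of_nonneg_left _ hW
      rw [show (1:ℝ) = Real.exp 0 by simp]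
      apply Real.exp_le_exp.mpr
      nlinarith [h]
    · positivity
  calc ∑ ω : Fin m → X, (if (m : ℝ) * t ≤ ∑ i, (μ - f (ω i)) then ∏ i, w (ω i) else 0)
      ≤ ∑ ω : Fin m → X,
          Real.exp (-(l * m * t)) * ∏ i, (w (ω i) * Real.exp (l * (μ - f (ω i)))) :=
        Finset.sum_le_sum fun ω _ => step1 ω
    _ = Real.exp (-(l * m * t)) * (∑ x, w x * Real.exp (l * (μ - f x))) ^ m := by
        rw [← Finset.mul_sum]
        congr 1
        have := Finset.prod_univ_sum (fun _ : Fin m => (Finset.univ : Finset X))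
          (fun _ x => w x * Real.exp (l * (μ - f x)))
        rw [Fintype.piFinset_univ] at this
        rw [← this, Finset.prod_const, Finset.card_univ, Fintype.card_fin]
    _ ≤ Real.exp (-(l * m * t)) * (Real.exp (l ^ 2 / 8)) ^ m := by
        apply mul_le_mul_of_nonneg_left _ (Real.exp_pos _).le
        apply pow_le_pow_left₀ (Finset.sum_nonneg fun x _ =>
          mul_nonneg (hw0 x) (Real.exp_pos _).le)
        exact mgf_bound w f hw0 hw1 hf0 hf1 hl0
    _ = Real.exp (-(2 * m * t ^ 2)) := by
        rw [← Real.exp_nat_mul, ← Real.exp_add]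
        congr 1
        rw [hl]; ring

section MC

variable {S A : Type*} [Fintype S] [Fintype A] [DecidableEq S]
variable (P : S → A → S → ℝ)

lemma stateDist_nonneg (hP0 : ∀ s a s', 0 ≤ P s a s') (μ : S → A → ℝ)
    (hμ0 : ∀ s a, 0 ≤ μ s a) (s0 : S) : ∀ t s, 0 ≤ stateDist P μ s0 t s := by
  intro t
  induction t with
  | zero => intro s; simp only [stateDist]; split <;> norm_num
  | succ t ih =>
      intro s
      simp only [stateDist]
      exact Finset.sum_nonneg fun s' _ => Finset.sum_nonneg fun a _ =>
        mul_nonneg (mul_nonneg (ih s') (hμ0 s' a)) (hP0 s' a s)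

lemma stateDist_sum_one (hP0 : ∀ s a s', 0 ≤ P s a s') (hP1 : ∀ s a, ∑ s', P s a s' = 1)
    (μ : S → A → ℝ) (hμ0 : ∀ s a, 0 ≤ μ s a) (hμ1 : ∀ s, ∑ a, μ s a = 1) (s0 : S) :
    ∀ t, ∑ s, stateDist P μ s0 t s = 1 := by
  intro t
  induction t with
  | zero => simp [stateDist]
  | succ t ih =>
      simp only [stateDist]
      rw [Finset.sum_comm]
      have : ∀ s' : S, ∑ s : S, ∑ a : A, stateDist P μ s0 t s' * μ s' a * P s' a s
          = stateDist P μ s0 t s' := by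
        intro s'
        rw [Finset.sum_comm]
        calc ∑ a : A, ∑ s : S, stateDist P μ s0 t s' * μ s' a * P s' a s
            = ∑ a : A, stateDist P μ s0 t s' * μ s' a * ∑ s : S, P s' a s := by
              exact Finset.sum_congr rfl fun a _ => by rw [Finset.mul_sum]
          _ = ∑ a : A, stateDist P μ s0 t s' * μ s' a := by
              exact Finset.sum_congr rfl fun a _ => by rw [hP1 s' a, mul_one]
          _ = stateDist P μ s0 t s' * ∑ a : A, μ s' a := by rw [Finset.mul_sum]
          _ = stateDist P μ s0 t s' := by rw [hμ1 s', mul_one]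
      rw [Finset.sum_congr rfl fun s' _ => this s']
      exact ih

lemma stateDist_le_one (hP0 : ∀ s a s', 0 ≤ P s a s') (hP1 : ∀ s a, ∑ s', P s a s' = 1)
    (μ : S → A → ℝ) (hμ0 : ∀ s a, 0 ≤ μ s a) (hμ1 : ∀ s, ∑ a, μ s a = 1) (s0 : S)
    (t : ℕ) (s : S) : stateDist P μ s0 t s ≤ 1 := by
  have h1 := stateDist_sum_one P hP0 hP1 μ hμ0 hμ1 s0 t
  have h0 := stateDist_nonneg P hP0 μ hμ0 s0 t
  calc stateDist P μ s0 t s ≤ ∑ s', stateDist P μ s0 t s' :=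
        Finset.single_le_sum (fun s' _ => h0 s') (Finset.mem_univ s)
    _ = 1 := h1

end MC

lemma summable_geom_mul {γ : ℝ} (hγ0 : 0 ≤ γ) (hγ1 : γ < 1) {c : ℕ → ℝ} (C : ℝ)
    (h0 : ∀ t, 0 ≤ c t) (hb : ∀ t, c t ≤ C) : Summable (fun t => γ ^ t * c t) := by
  apply Summable.of_nonneg_of_le (fun t => mul_nonneg (pow_nonneg hγ0 t) (h0 t))
    (fun t => mul_le_mul_of_nonneg_left (hb t) (pow_nonneg hγ0 t))
  exact (summable_geometric_of_lt_one hγ0 hγ1).mul_right C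

lemma value_diff {S A : Type*} [Fintype S] [Fintype A] [DecidableEq S]
    (P : S → A → S → ℝ) (hP0 : ∀ s a s', 0 ≤ P s a s') (hP1 : ∀ s a, ∑ s', P s a s' = 1)
    {γ Rmax : ℝ} (hγ0 : 0 ≤ γ) (hγ1 : γ < 1) (hR : 0 ≤ Rmax)
    (μ ν : S → A → ℝ)
    (hμ0 : ∀ s a, 0 ≤ μ s a) (hμ1 : ∀ s, ∑ a, μ s a = 1)
    (hν0 : ∀ s a, 0 ≤ ν s a) (hν1 : ∀ s, ∑ a, ν s a = 1)
    (rr : S → A → ℝ) (hrr : ∀ s a, 0 ≤ rr s a ∧ rr s a ≤ Rmax) (s0 : S) :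
    (∑' t : ℕ, γ ^ t * ∑ s, ∑ a, stateDist P μ s0 t s * μ s a * rr s a)
    - (∑' t : ℕ, γ ^ t * ∑ s, ∑ a, stateDist P ν s0 t s * ν s a * rr s a)
    ≤ (Rmax / (1 - γ)) * ∑' t : ℕ, γ ^ t * ∑ s, stateDist P μ s0 t s * ∑ a, |μ s a - ν s a| := by
  have h1γ : 0 < 1 - γ := by linarith
  set Rμ : ℕ → ℝ := fun t => ∑ s, ∑ a, stateDist P μ s0 t s * μ s a * rr s a with hRμdef
  set Rν : ℕ → ℝ := fun t => ∑ s, ∑ a, stateDist P ν s0 t s * ν s a * rr s a with hRνdef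
  set Δ : ℕ → ℝ := fun t =>
    ∑ s, ∑ a, |stateDist P μ s0 t s * μ s a - stateDist P ν s0 t s * ν s a| with hΔdef
  set e : ℕ → ℝ := fun t => ∑ s, |stateDist P μ s0 t s - stateDist P ν s0 t s| with hedef
  set d : ℕ → ℝ := fun t => ∑ s, stateDist P μ s0 t s * ∑ a, |μ s a - ν s a| with hddef
  have hρμ0 := stateDist_nonneg P hP0 μ hμ0 s0
  have hρν0 := stateDist_nonneg P hP0 ν hν0 s0
  have hρμ1 := stateDist_sum_one P hP0 hP1 μ hμ0 hμ1 s0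
  have hρν1 := stateDist_sum_one P hP0 hP1 ν hν0 hν1 s0
  have hd0 : ∀ t, 0 ≤ d t := fun t => Finset.sum_nonneg fun s _ =>
    mul_nonneg (hρμ0 t s) (Finset.sum_nonneg fun a _ => abs_nonneg _)
  have hd2 : ∀ t, d t ≤ 2 := by
    intro t
    have : ∀ s : S, stateDist P μ s0 t s * ∑ a, |μ s a - ν s a|
        ≤ stateDist P μ s0 t s * 2 := by
      intro s
      apply mul_le_mul_of_nonneg_left _ (hρμ0 t s)
      calc ∑ a, |μ s a - ν s a| ≤ ∑ a, (μ s a + ν s a) :=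
            Finset.sum_le_sum fun a _ => by
              have h1 : |μ s a - ν s a| ≤ |μ s a| + |ν s a| := abs_sub _ _
              rw [abs_of_nonneg (hμ0 s a), abs_of_nonneg (hν0 s a)] at h1
              exact h1
        _ = 2 := by rw [Finset.sum_add_distrib, hμ1 s, hν1 s]; norm_num
    calc d t ≤ ∑ s, stateDist P μ s0 t s * 2 := Finset.sum_le_sum fun s _ => this s
      _ = 2 := by rw [← Finset.sum_mul, hρμ1 t]; norm_num
  have hΔ0 : ∀ t, 0 ≤ Δ t := fun t => Finset.sum_nonneg fun s _ =>
    Finset.sum_nonneg fun a _ => abs_nonneg _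
  have hΔ2 : ∀ t, Δ t ≤ 2 := by
    intro t
    have : ∀ s a, |stateDist P μ s0 t s * μ s a - stateDist P ν s0 t s * ν s a|
        ≤ stateDist P μ s0 t s * μ s a + stateDist P ν s0 t s * ν s a := by
      intro s a
      have h1 := abs_sub (stateDist P μ s0 t s * μ s a) (stateDist P ν s0 t s * ν s a)
      rwa [abs_of_nonneg (mul_nonneg (hρμ0 t s) (hμ0 s a)),
        abs_of_nonneg (mul_nonneg (hρν0 t s) (hν0 s a))] at h1
    calc Δ t ≤ ∑ s, ∑ a, (stateDist P μ s0 t s * μ s a + stateDist P ν s0 t s * ν s a) :=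
          Finset.sum_le_sum fun s _ => Finset.sum_le_sum fun a _ => this s a
      _ = 2 := by
          simp only [Finset.sum_add_distrib]
          have e1 : ∀ s : S, ∑ a, stateDist P μ s0 t s * μ s a = stateDist P μ s0 t s := by
            intro s; rw [← Finset.mul_sum, hμ1 s, mul_one]
          have e2 : ∀ s : S, ∑ a, stateDist P ν s0 t s * ν s a = stateDist P ν s0 t s := by
            intro s; rw [← Finset.mul_sum, hν1 s, mul_one]
          rw [Finset.sum_congr rfl fun s _ => e1 s, Finset.sum_congr rfl fun s _ => e2 s,
            hρμ1 t, hρν1 t]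
          norm_num
  have hΔed : ∀ t, Δ t ≤ e t + d t := by
    intro t
    have hs : ∀ s : S, ∑ a, |stateDist P μ s0 t s * μ s a - stateDist P ν s0 t s * ν s a|
        ≤ |stateDist P μ s0 t s - stateDist P ν s0 t s|
          + stateDist P μ s0 t s * ∑ a, |μ s a - ν s a| := by
      intro s
      have hpt : ∀ a, |stateDist P μ s0 t s * μ s a - stateDist P ν s0 t s * ν s a|
          ≤ stateDist P μ s0 t s * |μ s a - ν s a|
            + |stateDist P μ s0 t s - stateDist P ν s0 t s| * ν s a := by
        intro a
        have key : stateDist P μ s0 t s * μ s a - stateDist P ν s0 t s * ν s a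
            = stateDist P μ s0 t s * (μ s a - ν s a)
              + (stateDist P μ s0 t s - stateDist P ν s0 t s) * ν s a := by ring
        rw [key]
        calc |stateDist P μ s0 t s * (μ s a - ν s a)
              + (stateDist P μ s0 t s - stateDist P ν s0 t s) * ν s a|
            ≤ |stateDist P μ s0 t s * (μ s a - ν s a)|
              + |(stateDist P μ s0 t s - stateDist P ν s0 t s) * ν s a| := abs_add_le _ _
          _ = stateDist P μ s0 t s * |μ s a - ν s a|
              + |stateDist P μ s0 t s - stateDist P ν s0 t s| * ν s a := by
              rw [abs_mul, abs_mul, abs_of_nonneg (hρμ0 t s), abs_of_nonneg (hν0 s a)]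
      calc ∑ a, |stateDist P μ s0 t s * μ s a - stateDist P ν s0 t s * ν s a|
          ≤ ∑ a, (stateDist P μ s0 t s * |μ s a - ν s a|
              + |stateDist P μ s0 t s - stateDist P ν s0 t s| * ν s a) :=
            Finset.sum_le_sum fun a _ => hpt a
        _ = stateDist P μ s0 t s * ∑ a, |μ s a - ν s a|
            + |stateDist P μ s0 t s - stateDist P ν s0 t s| * ∑ a, ν s a := by
            rw [Finset.sum_add_distrib, Finset.mul_sum, Finset.mul_sum]
        _ = |stateDist P μ s0 t s - stateDist P ν s0 t s|
            + stateDist P μ s0 t s * ∑ a, |μ s a - ν s a| := by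
            rw [hν1 s, mul_one]; ring
    calc Δ t ≤ ∑ s, (|stateDist P μ s0 t s - stateDist P ν s0 t s|
          + stateDist P μ s0 t s * ∑ a, |μ s a - ν s a|) :=
          Finset.sum_le_sum fun s _ => hs s
      _ = e t + d t := by rw [Finset.sum_add_distrib]
  have heΔ : ∀ t, e (t + 1) ≤ Δ t := by
    intro t
    have hs : ∀ s : S, |stateDist P μ s0 (t + 1) s - stateDist P ν s0 (t + 1) s|
        ≤ ∑ s', ∑ a, |stateDist P μ s0 t s' * μ s' a - stateDist P ν s0 t s' * ν s' a|
            * P s' a s := by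
      intro s
      show |(∑ s' : S, ∑ a : A, stateDist P μ s0 t s' * μ s' a * P s' a s)
          - ∑ s' : S, ∑ a : A, stateDist P ν s0 t s' * ν s' a * P s' a s| ≤ _
      rw [← Finset.sum_sub_distrib]
      calc |∑ s', ((∑ a, stateDist P μ s0 t s' * μ s' a * P s' a s)
            - ∑ a, stateDist P ν s0 t s' * ν s' a * P s' a s)|
          ≤ ∑ s', |(∑ a, stateDist P μ s0 t s' * μ s' a * P s' a s)
            - ∑ a, stateDist P ν s0 t s' * ν s' a * P s' a s| :=
            Finset.abs_sum_le_sum_abs _ _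
        _ ≤ ∑ s', ∑ a, |stateDist P μ s0 t s' * μ s' a - stateDist P ν s0 t s' * ν s' a|
              * P s' a s := by
            apply Finset.sum_le_sum
            intro s' _
            rw [← Finset.sum_sub_distrib]
            calc |∑ a, (stateDist P μ s0 t s' * μ s' a * P s' a s
                  - stateDist P ν s0 t s' * ν s' a * P s' a s)|
                ≤ ∑ a, |stateDist P μ s0 t s' * μ s' a * P s' a s
                  - stateDist P ν s0 t s' * ν s' a * P s' a s| :=
                  Finset.abs_sum_le_sum_abs _ _
              _ = ∑ a, |stateDist P μ s0 t s' * μ s' a - stateDist P ν s0 t s' * ν s' a|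
                    * P s' a s := by
                  apply Finset.sum_congr rfl
                  intro a _
                  rw [show stateDist P μ s0 t s' * μ s' a * P s' a s
                      - stateDist P ν s0 t s' * ν s' a * P s' a s
                      = (stateDist P μ s0 t s' * μ s' a - stateDist P ν s0 t s' * ν s' a)
                        * P s' a s by ring, abs_mul, abs_of_nonneg (hP0 s' a s)]
    calc e (t + 1) ≤ ∑ s, ∑ s', ∑ a,
          |stateDist P μ s0 t s' * μ s' a - stateDist P ν s0 t s' * ν s' a| * P s' a s :=
          Finset.sum_le_sum fun s _ => hs s
      _ = ∑ s', ∑ a, |stateDist P μ s0 t s' * μ s' a - stateDist P ν s0 t s' * ν s' a|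
            * ∑ s, P s' a s := by
          rw [Finset.sum_comm]
          apply Finset.sum_congr rfl
          intro s' _
          rw [Finset.sum_comm]
          exact Finset.sum_congr rfl fun a _ => by rw [Finset.mul_sum]
      _ = Δ t := by
          apply Finset.sum_congr rfl
          intro s' _
          exact Finset.sum_congr rfl fun a _ => by rw [hP1 s' a, mul_one]
  have he0 : e 0 = 0 := by
    simp only [hedef]
    apply Finset.sum_eq_zero
    intro s _
    simp [stateDist]
  have hed : ∀ t, e t ≤ ∑ u ∈ Finset.range t, d u := by
    intro t
    induction t with
    | zero => simp [he0]
    | succ t ih =>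
        calc e (t + 1) ≤ Δ t := heΔ t
          _ ≤ e t + d t := hΔed t
          _ ≤ (∑ u ∈ Finset.range t, d u) + d t := by linarith
          _ = ∑ u ∈ Finset.range (t + 1), d u := (Finset.sum_range_succ d t).symm
  have hΔsum : ∀ t, Δ t ≤ ∑ u ∈ Finset.range (t + 1), d u := by
    intro t
    calc Δ t ≤ e t + d t := hΔed t
      _ ≤ (∑ u ∈ Finset.range t, d u) + d t := by linarith [hed t]
      _ = ∑ u ∈ Finset.range (t + 1), d u := (Finset.sum_range_succ d t).symm
  have hRμb : ∀ t, 0 ≤ Rμ t ∧ Rμ t ≤ Rmax := by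
    intro t
    constructor
    · exact Finset.sum_nonneg fun s _ => Finset.sum_nonneg fun a _ =>
        mul_nonneg (mul_nonneg (hρμ0 t s) (hμ0 s a)) (hrr s a).1
    · calc Rμ t ≤ ∑ s, ∑ a, stateDist P μ s0 t s * μ s a * Rmax :=
            Finset.sum_le_sum fun s _ => Finset.sum_le_sum fun a _ =>
              mul_le_mul_of_nonneg_left (hrr s a).2 (mul_nonneg (hρμ0 t s) (hμ0 s a))
        _ = Rmax := by
            have e1 : ∀ s : S, ∑ a, stateDist P μ s0 t s * μ s a * Rmax
                = stateDist P μ s0 t s * Rmax := by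
              intro s
              calc ∑ a, stateDist P μ s0 t s * μ s a * Rmax
                  = (∑ a, stateDist P μ s0 t s * μ s a) * Rmax := by rw [Finset.sum_mul]
                _ = stateDist P μ s0 t s * Rmax := by rw [← Finset.mul_sum, hμ1 s, mul_one]
            rw [Finset.sum_congr rfl fun s _ => e1 s, ← Finset.sum_mul, hρμ1 t, one_mul]
  have hRνb : ∀ t, 0 ≤ Rν t ∧ Rν t ≤ Rmax := by
    intro t
    constructor
    · exact Finset.sum_nonneg fun s _ => Finset.sum_nonneg fun a _ =>
        mul_nonneg (mul_nonneg (hρν0 t s) (hν0 s a)) (hrr s a).1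
    · calc Rν t ≤ ∑ s, ∑ a, stateDist P ν s0 t s * ν s a * Rmax :=
            Finset.sum_le_sum fun s _ => Finset.sum_le_sum fun a _ =>
              mul_le_mul_of_nonneg_left (hrr s a).2 (mul_nonneg (hρν0 t s) (hν0 s a))
        _ = Rmax := by
            have e1 : ∀ s : S, ∑ a, stateDist P ν s0 t s * ν s a * Rmax
                = stateDist P ν s0 t s * Rmax := by
              intro s
              calc ∑ a, stateDist P ν s0 t s * ν s a * Rmax
                  = (∑ a, stateDist P ν s0 t s * ν s a) * Rmax := by rw [Finset.sum_mul]
                _ = stateDist P ν s0 t s * Rmax := by rw [← Finset.mul_sum, hν1 s, mul_one]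
            rw [Finset.sum_congr rfl fun s _ => e1 s, ← Finset.sum_mul, hρν1 t, one_mul]
  have hSμ : Summable (fun t => γ ^ t * Rμ t) :=
    summable_geom_mul hγ0 hγ1 Rmax (fun t => (hRμb t).1) (fun t => (hRμb t).2)
  have hSν : Summable (fun t => γ ^ t * Rν t) :=
    summable_geom_mul hγ0 hγ1 Rmax (fun t => (hRνb t).1) (fun t => (hRνb t).2)
  have hSd : Summable (fun t => γ ^ t * d t) := summable_geom_mul hγ0 hγ1 2 hd0 hd2
  have hSΔ : Summable (fun t => γ ^ t * (Rmax * Δ t)) :=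
    summable_geom_mul hγ0 hγ1 (Rmax * 2) (fun t => mul_nonneg hR (hΔ0 t))
      (fun t => mul_le_mul_of_nonneg_left (hΔ2 t) hR)
  have hRdiff : ∀ t, Rμ t - Rν t ≤ Rmax * Δ t := by
    intro t
    have key : Rμ t - Rν t = ∑ s, ∑ a, (stateDist P μ s0 t s * μ s a * rr s a
        - stateDist P ν s0 t s * ν s a * rr s a) := by
      simp only [hRμdef, hRνdef, Finset.sum_sub_distrib]
    rw [key]
    calc ∑ s, ∑ a, (stateDist P μ s0 t s * μ s a * rr s a
          - stateDist P ν s0 t s * ν s a * rr s a)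
        ≤ ∑ s, ∑ a, |stateDist P μ s0 t s * μ s a - stateDist P ν s0 t s * ν s a| * Rmax := by
          apply Finset.sum_le_sum
          intro s _
          apply Finset.sum_le_sum
          intro a _
          have h1 : stateDist P μ s0 t s * μ s a * rr s a
              - stateDist P ν s0 t s * ν s a * rr s a
              = (stateDist P μ s0 t s * μ s a - stateDist P ν s0 t s * ν s a) * rr s a := by
            ring
          rw [h1]
          calc (stateDist P μ s0 t s * μ s a - stateDist P ν s0 t s * ν s a) * rr s a
              ≤ |stateDist P μ s0 t s * μ s a - stateDist P ν s0 t s * ν s a| * rr s a :=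
                mul_le_mul_of_nonneg_right (le_abs_self _) (hrr s a).1
            _ ≤ |stateDist P μ s0 t s * μ s a - stateDist P ν s0 t s * ν s a| * Rmax :=
                mul_le_mul_of_nonneg_left (hrr s a).2 (abs_nonneg _)
      _ = Rmax * Δ t := by
          simp only [hΔdef, Finset.mul_sum]
          exact Finset.sum_congr rfl fun s _ => Finset.sum_congr rfl fun a _ => by ring
  have hkey : ∑' t : ℕ, γ ^ t * Δ t ≤ (1 / (1 - γ)) * ∑' t : ℕ, γ ^ t * d t := by
    have hSΔ' : Summable (fun t => γ ^ t * Δ t) := summable_geom_mul hγ0 hγ1 2 hΔ0 hΔ2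
    apply Summable.tsum_le_of_sum_range_le hSΔ'
    intro n
    have step1 : ∑ t ∈ Finset.range n, γ ^ t * Δ t
        ≤ ∑ t ∈ Finset.range n, ∑ u ∈ Finset.range n,
            (if u ≤ t then γ ^ t * d u else 0) := by
      apply Finset.sum_le_sum
      intro t ht
      have h1 : γ ^ t * Δ t ≤ γ ^ t * ∑ u ∈ Finset.range (t + 1), d u :=
        mul_le_mul_of_nonneg_left (hΔsum t) (pow_nonneg hγ0 t)
      have h2 : ∑ u ∈ Finset.range n, (if u ≤ t then γ ^ t * d u else 0)
          = ∑ u ∈ Finset.range (t + 1), γ ^ t * d u := by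
        rw [← Finset.sum_filter]
        apply Finset.sum_congr _ (fun u _ => rfl)
        ext u
        simp only [Finset.mem_filter, Finset.mem_range]
        constructor
        · rintro ⟨_, h⟩; omega
        · intro h
          have ht' := Finset.mem_range.mp ht
          constructor <;> omega
      rw [h2, ← Finset.mul_sum]
      exact h1
    have step2 : ∑ t ∈ Finset.range n, ∑ u ∈ Finset.range n,
          (if u ≤ t then γ ^ t * d u else 0)
        = ∑ u ∈ Finset.range n, ∑ t ∈ Finset.range n,
          (if u ≤ t then γ ^ t * d u else 0) := Finset.sum_comm
    have step3 : ∀ u, ∑ t ∈ Finset.range n, (if u ≤ t then γ ^ t * d u else 0)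
        ≤ (1 / (1 - γ)) * (γ ^ u * d u) := by
      intro u
      have h1 : ∑ t ∈ Finset.range n, (if u ≤ t then γ ^ t * d u else 0)
          = (∑ t ∈ Finset.range n, (if u ≤ t then γ ^ t else 0)) * d u := by
        rw [Finset.sum_mul]
        exact Finset.sum_congr rfl fun t _ => by split <;> simp
      rw [h1]
      have hgeo : ∑ t ∈ Finset.range n, (if u ≤ t then γ ^ t else 0) ≤ γ ^ u / (1 - γ) := by
        have hf : ∀ t : ℕ, 0 ≤ (if u ≤ t then γ ^ t else 0 : ℝ) := by
          intro t; split
          · exact pow_nonneg hγ0 t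
          · exact le_refl 0
        have hS : Summable (fun t : ℕ => if u ≤ t then γ ^ t else (0:ℝ)) := by
          apply Summable.of_nonneg_of_le hf (fun t => ?_)
            (summable_geometric_of_lt_one hγ0 hγ1)
          split
          · exact le_refl _
          · exact pow_nonneg hγ0 t
        calc ∑ t ∈ Finset.range n, (if u ≤ t then γ ^ t else 0)
            ≤ ∑' t : ℕ, (if u ≤ t then γ ^ t else (0:ℝ)) := Summable.sum_le_tsum _ (fun t _ => hf t) hS
          _ = γ ^ u / (1 - γ) := by
              rw [← Summable.sum_add_tsum_nat_add u hS]
              have hz : ∑ i ∈ Finset.range u, (if u ≤ i then γ ^ i else (0:ℝ)) = 0 := by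
                apply Finset.sum_eq_zero
                intro i hi
                have := Finset.mem_range.mp hi
                rw [if_neg (by omega)]
              rw [hz, zero_add]
              have he : ∀ i : ℕ, (if u ≤ i + u then γ ^ (i + u) else (0:ℝ)) = γ ^ i * γ ^ u := by
                intro i
                rw [if_pos (by omega), pow_add]
              rw [tsum_congr he, tsum_mul_right, tsum_geometric_of_lt_one hγ0 hγ1]
              rw [div_eq_mul_inv, mul_comm]
      calc (∑ t ∈ Finset.range n, (if u ≤ t then γ ^ t else 0)) * d u
          ≤ (γ ^ u / (1 - γ)) * d u := mul_le_mul_of_nonneg_right hgeo (hd0 u)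
        _ = (1 / (1 - γ)) * (γ ^ u * d u) := by ring
    calc ∑ t ∈ Finset.range n, γ ^ t * Δ t
        ≤ ∑ u ∈ Finset.range n, ∑ t ∈ Finset.range n,
            (if u ≤ t then γ ^ t * d u else 0) := by rw [← step2]; exact step1
      _ ≤ ∑ u ∈ Finset.range n, (1 / (1 - γ)) * (γ ^ u * d u) :=
          Finset.sum_le_sum fun u _ => step3 u
      _ = (1 / (1 - γ)) * ∑ u ∈ Finset.range n, γ ^ u * d u := by rw [Finset.mul_sum]
      _ ≤ (1 / (1 - γ)) * ∑' u : ℕ, γ ^ u * d u := by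
          apply mul_le_mul_of_nonneg_left _ (by positivity)
          exact Summable.sum_le_tsum _ (fun u _ => mul_nonneg (pow_nonneg hγ0 u) (hd0 u)) hSd
  calc (∑' t : ℕ, γ ^ t * Rμ t) - (∑' t : ℕ, γ ^ t * Rν t)
      = ∑' t : ℕ, (γ ^ t * Rμ t - γ ^ t * Rν t) := (Summable.tsum_sub hSμ hSν).symm
    _ ≤ ∑' t : ℕ, γ ^ t * (Rmax * Δ t) := by
        apply Summable.tsum_le_tsum _ (hSμ.sub hSν) hSΔ
        intro t
        have h1 : γ ^ t * Rμ t - γ ^ t * Rν t = γ ^ t * (Rμ t - Rν t) := by ring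
        rw [h1]
        exact mul_le_mul_of_nonneg_left (hRdiff t) (pow_nonneg hγ0 t)
    _ = Rmax * ∑' t : ℕ, γ ^ t * Δ t := by
        rw [← tsum_mul_left]
        exact tsum_congr fun t => by ring
    _ ≤ Rmax * ((1 / (1 - γ)) * ∑' t : ℕ, γ ^ t * d t) :=
        mul_le_mul_of_nonneg_left hkey hR
    _ = (Rmax / (1 - γ)) * ∑' t : ℕ, γ ^ t * d t := by ring

section Occ

variable {S G A : Type*} [Fintype S] [Fintype G] [Fintype A] [DecidableEq S]
variable (P : S → A → S → ℝ)

lemma occ_weighted (hP0 : ∀ s a s', 0 ≤ P s a s') (hP1 : ∀ s a, ∑ s', P s a s' = 1)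
    {γ : ℝ} (hγ0 : 0 ≤ γ) (hγ1 : γ < 1) (πE : S → G → A → ℝ)
    (hπE0 : ∀ s g a, 0 ≤ πE s g a) (hπE1 : ∀ s g, ∑ a, πE s g a = 1)
    (s0 : S) (g : G) (c : S → ℝ) (hc0 : ∀ s, 0 ≤ c s) (C : ℝ) (hc1 : ∀ s, c s ≤ C) :
    ∑ s, goalOcc P γ πE s0 g s * c s
      = (1 - γ) * ∑' t : ℕ, γ ^ t * ∑ s, stateDist P (fun s' a => πE s' g a) s0 t s * c s := by
  have hρ0 := stateDist_nonneg P hP0 (fun s' a => πE s' g a) (fun s a => hπE0 s g a) s0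
  have hρle := stateDist_le_one P hP0 hP1 (fun s' a => πE s' g a)
    (fun s a => hπE0 s g a) (fun s => hπE1 s g) s0
  have hsum_s : ∀ s : S,
      Summable (fun t => γ ^ t * (stateDist P (fun s' a => πE s' g a) s0 t s * c s)) := by
    intro s
    apply summable_geom_mul hγ0 hγ1 C
    · exact fun t => mul_nonneg (hρ0 t s) (hc0 s)
    · intro t
      calc stateDist P (fun s' a => πE s' g a) s0 t s * c s ≤ 1 * c s :=
            mul_le_mul_of_nonneg_right (hρle t s) (hc0 s)
        _ ≤ C := by rw [one_mul]; exact hc1 s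
  calc ∑ s, goalOcc P γ πE s0 g s * c s
      = ∑ s, ∑' t : ℕ, (1 - γ) * (γ ^ t * (stateDist P (fun s' a => πE s' g a) s0 t s * c s)) := by
        apply Finset.sum_congr rfl
        intro s _
        have hc : ∀ t : ℕ, (1 - γ) * (γ ^ t * (stateDist P (fun s' a => πE s' g a) s0 t s * c s))
            = ((γ:ℝ) ^ t * stateDist P (fun s' a => πE s' g a) s0 t s) * ((1 - γ) * c s) :=
          fun t => by ring
        rw [tsum_congr hc, tsum_mul_right, goalOcc]
        ring
    _ = ∑' t : ℕ, ∑ s, (1 - γ) * (γ ^ t * (stateDist P (fun s' a => πE s' g a) s0 t s * c s)) :=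
        (Summable.tsum_finsetSum fun s _ => (hsum_s s).mul_left (1 - γ)).symm
    _ = (1 - γ) * ∑' t : ℕ, γ ^ t * ∑ s, stateDist P (fun s' a => πE s' g a) s0 t s * c s := by
        rw [← tsum_mul_left]
        apply tsum_congr
        intro t
        rw [Finset.mul_sum, Finset.mul_sum]

lemma goalOcc_nonneg {γ : ℝ} (hγ0 : 0 ≤ γ) (hγ1 : γ ≤ 1) (hP0 : ∀ s a s', 0 ≤ P s a s')
    (πE : S → G → A → ℝ) (hπE0 : ∀ s g a, 0 ≤ πE s g a) (s0 : S) (g : G) (s : S) :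
    0 ≤ goalOcc P γ πE s0 g s := by
  apply mul_nonneg (by linarith)
  apply tsum_nonneg
  intro t
  exact mul_nonneg (pow_nonneg hγ0 t)
    (stateDist_nonneg P hP0 _ (fun s a => hπE0 s g a) s0 t s)

end Occ

section TV

variable {S G A : Type*} [Fintype S] [Fintype G] [Fintype A] [DecidableEq S]
variable (P : S → A → S → ℝ)

lemma tv_half_le_one {π1 π2 : S → G → A → ℝ}
    (h1 : ∀ s g, (∀ a, 0 ≤ π1 s g a) ∧ ∑ a, π1 s g a = 1)
    (h2 : ∀ s g, (∀ a, 0 ≤ π2 s g a) ∧ ∑ a, π2 s g a = 1) (s : S) (g : G) :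
    (1 / 2 : ℝ) * ∑ a, |π1 s g a - π2 s g a| ≤ 1 := by
  have : ∑ a, |π1 s g a - π2 s g a| ≤ 2 := by
    calc ∑ a, |π1 s g a - π2 s g a| ≤ ∑ a, (π1 s g a + π2 s g a) :=
          Finset.sum_le_sum fun a _ => by
            have hab : |π1 s g a - π2 s g a| ≤ |π1 s g a| + |π2 s g a| := abs_sub _ _
            rwa [abs_of_nonneg ((h1 s g).1 a), abs_of_nonneg ((h2 s g).1 a)] at hab
      _ = 2 := by rw [Finset.sum_add_distrib, (h1 s g).2, (h2 s g).2]; norm_num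
  linarith

lemma goalOcc_sum_one (hP0 : ∀ s a s', 0 ≤ P s a s') (hP1 : ∀ s a, ∑ s', P s a s' = 1)
    {γ : ℝ} (hγ0 : 0 ≤ γ) (hγ1 : γ < 1) (πE : S → G → A → ℝ)
    (hπE0 : ∀ s g a, 0 ≤ πE s g a) (hπE1 : ∀ s g, ∑ a, πE s g a = 1) (s0 : S) (g : G) :
    ∑ s, goalOcc P γ πE s0 g s = 1 := by
  have h := occ_weighted P hP0 hP1 hγ0 hγ1 πE hπE0 hπE1 s0 g (fun _ => 1)
    (fun _ => zero_le_one) 1 (fun _ => le_refl 1)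
  simp only [mul_one] at h
  rw [h]
  have hs : ∀ t : ℕ, ∑ s, stateDist P (fun s' a => πE s' g a) s0 t s = 1 :=
    stateDist_sum_one P hP0 hP1 _ (fun s a => hπE0 s g a) (fun s => hπE1 s g) s0
  rw [tsum_congr fun t => by rw [hs t, mul_one]]
  rw [tsum_geometric_of_lt_one hγ0 hγ1]
  field_simp
  exact div_self (by linarith)

lemma tvLoss_nonneg {γ : ℝ} (hγ0 : 0 ≤ γ) (hγ1 : γ < 1) (hP0 : ∀ s a s', 0 ≤ P s a s')
    (πE π1 π2 : S → G → A → ℝ) (hπE0 : ∀ s g a, 0 ≤ πE s g a) (p : S × G) :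
    0 ≤ tvLoss P γ πE π1 π2 p :=
  Finset.sum_nonneg fun s _ => mul_nonneg
    (goalOcc_nonneg P hγ0 hγ1.le hP0 πE hπE0 p.1 p.2 s)
    (mul_nonneg (by norm_num) (Finset.sum_nonneg fun a _ => abs_nonneg _))

lemma tvLoss_le_one (hP0 : ∀ s a s', 0 ≤ P s a s') (hP1 : ∀ s a, ∑ s', P s a s' = 1)
    {γ : ℝ} (hγ0 : 0 ≤ γ) (hγ1 : γ < 1) (πE π1 π2 : S → G → A → ℝ)
    (hπE0 : ∀ s g a, 0 ≤ πE s g a) (hπE1 : ∀ s g, ∑ a, πE s g a = 1)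
    (h1 : ∀ s g, (∀ a, 0 ≤ π1 s g a) ∧ ∑ a, π1 s g a = 1)
    (h2 : ∀ s g, (∀ a, 0 ≤ π2 s g a) ∧ ∑ a, π2 s g a = 1) (p : S × G) :
    tvLoss P γ πE π1 π2 p ≤ 1 := by
  calc tvLoss P γ πE π1 π2 p ≤ ∑ s, goalOcc P γ πE p.1 p.2 s * 1 :=
        Finset.sum_le_sum fun s _ => mul_le_mul_of_nonneg_left
          (tv_half_le_one h1 h2 s p.2)
          (goalOcc_nonneg P hγ0 hγ1.le hP0 πE hπE0 p.1 p.2 s)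
    _ = 1 := by
        simp only [mul_one]
        exact goalOcc_sum_one P hP0 hP1 hγ0 hγ1 πE hπE0 hπE1 p.1 p.2

lemma tvLoss_triangle {γ : ℝ} (hγ0 : 0 ≤ γ) (hγ1 : γ < 1) (hP0 : ∀ s a s', 0 ≤ P s a s')
    (πE πh π1 π2 : S → G → A → ℝ) (hπE0 : ∀ s g a, 0 ≤ πE s g a) (p : S × G) :
    tvLoss P γ πE π1 π2 p ≤ tvLoss P γ πE πh π2 p + tvLoss P γ πE πh π1 p := by
  rw [tvLoss, tvLoss, tvLoss, ← Finset.sum_add_distrib]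
  apply Finset.sum_le_sum
  intro s _
  have hocc := goalOcc_nonneg P hγ0 hγ1.le hP0 πE hπE0 p.1 p.2 s
  rw [← mul_add]
  apply mul_le_mul_of_nonneg_left _ hocc
  rw [← mul_add]
  apply mul_le_mul_of_nonneg_left _ (by norm_num : (0:ℝ) ≤ 1 / 2)
  rw [← Finset.sum_add_distrib]
  apply Finset.sum_le_sum
  intro a _
  calc |π1 s p.2 a - π2 s p.2 a|
      ≤ |π1 s p.2 a - πh s p.2 a| + |πh s p.2 a - π2 s p.2 a| := abs_sub_le _ _ _
    _ = |πh s p.2 a - π2 s p.2 a| + |πh s p.2 a - π1 s p.2 a| := by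
        rw [abs_sub_comm (π1 s p.2 a)]; ring

lemma d1_shift {X : Type*} [Fintype X] (PT PS F : X → ℝ)
    (hF0 : ∀ x, 0 ≤ F x) (hF2 : ∀ x, F x ≤ 2) :
    ∑ x, PT x * F x ≤ ∑ x, PS x * F x + d1 PT PS := by
  classical
  have key : ∑ x, (PT x - PS x) * F x ≤ d1 PT PS := by
    set J := Finset.univ.filter (fun x => PS x ≤ PT x) with hJ
    have h1 : ∑ x, (PT x - PS x) * F x ≤ ∑ x ∈ J, (PT x - PS x) * F x := by
      rw [← Finset.sum_filter_add_sum_filter_not Finset.univ (fun x => PS x ≤ PT x)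
        (fun x => (PT x - PS x) * F x)]
      have hneg : ∑ x ∈ Finset.univ.filter (fun x => ¬ PS x ≤ PT x), (PT x - PS x) * F x ≤ 0 :=
        Finset.sum_nonpos fun x hx => mul_nonpos_of_nonpos_of_nonneg (by
          have := (Finset.mem_filter.mp hx).2
          linarith [lt_of_not_ge this]) (hF0 x)
      linarith
    have h2 : ∑ x ∈ J, (PT x - PS x) * F x ≤ 2 * |∑ x ∈ J, (PT x - PS x)| := by
      calc ∑ x ∈ J, (PT x - PS x) * F x ≤ ∑ x ∈ J, (PT x - PS x) * 2 :=
            Finset.sum_le_sum fun x hx => mul_le_mul_of_nonneg_left (hF2 x) (by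
              have := (Finset.mem_filter.mp hx).2; linarith)
        _ = 2 * (∑ x ∈ J, (PT x - PS x)) := by rw [← Finset.sum_mul]; ring
        _ ≤ 2 * |∑ x ∈ J, (PT x - PS x)| := by
            nlinarith [le_abs_self (∑ x ∈ J, (PT x - PS x))]
    have h3 : |∑ x ∈ J, (PT x - PS x)|
        ≤ (Finset.univ.powerset.sup' ⟨∅, Finset.empty_mem_powerset _⟩
            fun Jf => |∑ x ∈ Jf, (PT x - PS x)|) :=
      Finset.le_sup' (f := fun Jf => |∑ x ∈ Jf, (PT x - PS x)|)
        (Finset.mem_powerset.mpr (Finset.subset_univ J))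
    calc ∑ x, (PT x - PS x) * F x ≤ 2 * |∑ x ∈ J, (PT x - PS x)| := le_trans h1 h2
      _ ≤ d1 PT PS := by rw [d1]; linarith
  have hsplit : ∑ x, PT x * F x = ∑ x, PS x * F x + ∑ x, (PT x - PS x) * F x := by
    rw [← Finset.sum_add_distrib]
    exact Finset.sum_congr rfl fun x _ => by ring
  linarith

end TV

lemma imitation_gap {S G A : Type*} [Fintype S] [Fintype G] [Fintype A] [DecidableEq S]
    (P : S → A → S → ℝ) (r : S → A → G → ℝ) {Rmax γ : ℝ}
    (hR : 0 ≤ Rmax) (hr : ∀ s a g, 0 ≤ r s a g ∧ r s a g ≤ Rmax)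
    (hγ0 : 0 ≤ γ) (hγ1 : γ < 1)
    (hP0 : ∀ s a s', 0 ≤ P s a s') (hP1 : ∀ s a, ∑ s', P s a s' = 1)
    (πE πA : S → G → A → ℝ)
    (hπE : ∀ s g, (∀ a, 0 ≤ πE s g a) ∧ ∑ a, πE s g a = 1)
    (hπA : ∀ s g, (∀ a, 0 ≤ πA s g a) ∧ ∑ a, πA s g a = 1)
    (p : S × G) :
    goalValue P r γ πE p.1 p.2 - goalValue P r γ πA p.1 p.2
      ≤ (2 * Rmax / (1 - γ) ^ 2) * tvLoss P γ πE πE πA p := by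
  obtain ⟨s0, g⟩ := p
  show goalValue P r γ πE s0 g - goalValue P r γ πA s0 g
      ≤ (2 * Rmax / (1 - γ) ^ 2) * tvLoss P γ πE πE πA (s0, g)
  have h1γ : (0:ℝ) < 1 - γ := by linarith
  have hne : (1 - γ) ≠ 0 := ne_of_gt h1γ
  set D := ∑' t : ℕ, γ ^ t *
      ∑ s, stateDist P (fun s' a => πE s' g a) s0 t s * ∑ a, |πE s g a - πA s g a| with hD
  have hvd : goalValue P r γ πE s0 g - goalValue P r γ πA s0 g ≤ (Rmax / (1 - γ)) * D :=
    value_diff P hP0 hP1 hγ0 hγ1 hR (fun s a => πE s g a) (fun s a => πA s g a)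
      (fun s a => (hπE s g).1 a) (fun s => (hπE s g).2)
      (fun s a => (hπA s g).1 a) (fun s => (hπA s g).2)
      (fun s a => r s a g) (fun s a => hr s a g) s0
  have htv : tvLoss P γ πE πE πA (s0, g) = ((1 - γ) / 2) * D := by
    have hw := occ_weighted P hP0 hP1 hγ0 hγ1 πE (fun s g a => (hπE s g).1 a)
      (fun s g => (hπE s g).2) s0 g
      (fun s => (1/2 : ℝ) * ∑ a, |πE s g a - πA s g a|)
      (fun s => mul_nonneg (by norm_num) (Finset.sum_nonneg fun a _ => abs_nonneg _))
      1 (fun s => tv_half_le_one hπE hπA s g)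
    calc tvLoss P γ πE πE πA (s0, g)
        = ∑ s, goalOcc P γ πE s0 g s * ((1/2 : ℝ) * ∑ a, |πE s g a - πA s g a|) := by
          rw [tvLoss]
      _ = (1 - γ) * ∑' t : ℕ, γ ^ t * ∑ s, stateDist P (fun s' a => πE s' g a) s0 t s
            * ((1/2 : ℝ) * ∑ a, |πE s g a - πA s g a|) := hw
      _ = ((1 - γ) / 2) * D := by
          have hper : ∀ t : ℕ, γ ^ t * ∑ s, stateDist P (fun s' a => πE s' g a) s0 t s
                * ((1/2 : ℝ) * ∑ a, |πE s g a - πA s g a|)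
              = (1/2 : ℝ) * (γ ^ t * ∑ s, stateDist P (fun s' a => πE s' g a) s0 t s
                * ∑ a, |πE s g a - πA s g a|) := by
            intro t
            have hss : ∑ s, stateDist P (fun s' a => πE s' g a) s0 t s
                  * ((1/2 : ℝ) * ∑ a, |πE s g a - πA s g a|)
                = (1/2 : ℝ) * ∑ s, stateDist P (fun s' a => πE s' g a) s0 t s
                  * ∑ a, |πE s g a - πA s g a| := by
              rw [Finset.mul_sum]
              exact Finset.sum_congr rfl fun s _ => by ring
            rw [hss]; ring
          rw [tsum_congr hper, tsum_mul_left, hD]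
          ring
  have heq : (2 * Rmax / (1 - γ) ^ 2) * (((1 - γ) / 2) * D) = (Rmax / (1 - γ)) * D := by
    field_simp
  rw [htv, heq]
  exact hvd


open scoped Classical in
/-- Full OOD generalization bound: with probability at least `1 − δ` over `m` i.i.d.
training state-goal pairs drawn from the training distribution `PS`, the suboptimality of
`π` (from a finite hypothesis class `Hyp`) on the testing distribution `PT` is bounded by
`(2R_max/(1−γ)²)` times the sum of the empirical imitation loss to the surrogate expert
`π̂_E`, the expert estimation gap, the distribution shift `d1(T,S)`, and the finite-class
estimation error term. -/
theorem stmt13 {S G A : Type*} [Fintype S] [Fintype G] [Fintype A] [DecidableEq S]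
    (P : S → A → S → ℝ) (r : S → A → G → ℝ) (Rmax γ : ℝ)
    (hR : 0 ≤ Rmax) (hr : ∀ s a g, 0 ≤ r s a g ∧ r s a g ≤ Rmax)
    (hγ0 : 0 ≤ γ) (hγ1 : γ < 1)
    (hP : ∀ s a, (∀ s', 0 ≤ P s a s') ∧ ∑ s', P s a s' = 1)
    (π πhatE πE : S → G → A → ℝ)
    (hπ : ∀ s g, (∀ a, 0 ≤ π s g a) ∧ ∑ a, π s g a = 1)
    (hπhatE : ∀ s g, (∀ a, 0 ≤ πhatE s g a) ∧ ∑ a, πhatE s g a = 1)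
    (hπE : ∀ s g, (∀ a, 0 ≤ πE s g a) ∧ ∑ a, πE s g a = 1)
    (Hyp : Finset (S → G → A → ℝ)) (hπHyp : π ∈ Hyp)
    (PS PT : S × G → ℝ)
    (hPS : (∀ p, 0 ≤ PS p) ∧ ∑ p, PS p = 1)
    (hPT : (∀ p, 0 ≤ PT p) ∧ ∑ p, PT p = 1)
    (m : ℕ) (hm : 0 < m) (δ : ℝ) (hδ0 : 0 < δ) (hδ1 : δ < 1) :
    1 - δ ≤
      ∑ ω : Fin m → S × G,
        (if ∑ p : S × G, PT p * (goalValue P r γ πE p.1 p.2 - goalValue P r γ π p.1 p.2) ≤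
            (2 * Rmax / (1 - γ) ^ 2) *
              ((1 / (m : ℝ)) * (∑ i, tvLoss P γ πE πhatE π (ω i)) +
                (∑ p : S × G, PS p * tvLoss P γ πE πhatE πE p) +
                d1 PT PS +
                Real.sqrt ((Real.log (2 * (Hyp.card : ℝ)) + Real.log (1 / δ)) / (2 * m)))
          then ∏ i, PS (ω i) else 0) := by
  classical
  have hP0 : ∀ s a s', 0 ≤ P s a s' := fun s a s' => (hP s a).1 s'
  have hP1 : ∀ s a, ∑ s', P s a s' = 1 := fun s a => (hP s a).2
  have h1γ : (0:ℝ) < 1 - γ := by linarith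
  have hm' : (0:ℝ) < m := by exact_mod_cast hm
  have hC0 : (0:ℝ) ≤ 2 * Rmax / (1 - γ) ^ 2 := by positivity
  set t : ℝ := Real.sqrt ((Real.log (2 * (Hyp.card : ℝ)) + Real.log (1 / δ)) / (2 * m))
    with htdef
  have ht0 : 0 ≤ t := Real.sqrt_nonneg _
  have hf0 : ∀ p : S × G, 0 ≤ tvLoss P γ πE πhatE π p := fun p =>
    tvLoss_nonneg P hγ0 hγ1 hP0 πE πhatE π (fun s g a => (hπE s g).1 a) p
  have hf1 : ∀ p : S × G, tvLoss P γ πE πhatE π p ≤ 1 := fun p =>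
    tvLoss_le_one P hP0 hP1 hγ0 hγ1 πE πhatE π (fun s g a => (hπE s g).1 a)
      (fun s g => (hπE s g).2) hπhatE hπ p
  have hg0 : ∀ p : S × G, 0 ≤ tvLoss P γ πE πhatE πE p := fun p =>
    tvLoss_nonneg P hγ0 hγ1 hP0 πE πhatE πE (fun s g a => (hπE s g).1 a) p
  have hg1 : ∀ p : S × G, tvLoss P γ πE πhatE πE p ≤ 1 := fun p =>
    tvLoss_le_one P hP0 hP1 hγ0 hγ1 πE πhatE πE (fun s g a => (hπE s g).1 a)
      (fun s g => (hπE s g).2) hπhatE hπE p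
  -- Deterministic part: the good event implies the main condition
  have hdet : ∀ ω : Fin m → S × G,
      (∑ p : S × G, PS p * tvLoss P γ πE πhatE π p
        ≤ (1 / (m : ℝ)) * (∑ i, tvLoss P γ πE πhatE π (ω i)) + t) →
      ∑ p : S × G, PT p * (goalValue P r γ πE p.1 p.2 - goalValue P r γ π p.1 p.2) ≤
        (2 * Rmax / (1 - γ) ^ 2) *
          ((1 / (m : ℝ)) * (∑ i, tvLoss P γ πE πhatE π (ω i)) +
            (∑ p : S × G, PS p * tvLoss P γ πE πhatE πE p) +
            d1 PT PS + t) := by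
    intro ω hE
    calc ∑ p : S × G, PT p * (goalValue P r γ πE p.1 p.2 - goalValue P r γ π p.1 p.2)
        ≤ ∑ p : S × G, PT p * ((2 * Rmax / (1 - γ) ^ 2) * tvLoss P γ πE πE π p) :=
          Finset.sum_le_sum fun p _ => mul_le_mul_of_nonneg_left
            (imitation_gap P r hR hr hγ0 hγ1 hP0 hP1 πE π hπE hπ p) (hPT.1 p)
      _ ≤ ∑ p : S × G, PT p * ((2 * Rmax / (1 - γ) ^ 2) *
            (tvLoss P γ πE πhatE π p + tvLoss P γ πE πhatE πE p)) :=
          Finset.sum_le_sum fun p _ => mul_le_mul_of_nonneg_left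
            (mul_le_mul_of_nonneg_left
              (tvLoss_triangle P hγ0 hγ1 hP0 πE πhatE πE π
                (fun s g a => (hπE s g).1 a) p) hC0) (hPT.1 p)
      _ = (2 * Rmax / (1 - γ) ^ 2) * ∑ p : S × G,
            PT p * (tvLoss P γ πE πhatE π p + tvLoss P γ πE πhatE πE p) := by
          rw [Finset.mul_sum]
          exact Finset.sum_congr rfl fun p _ => by ring
      _ ≤ (2 * Rmax / (1 - γ) ^ 2) * (∑ p : S × G,
            PS p * (tvLoss P γ πE πhatE π p + tvLoss P γ πE πhatE πE p) + d1 PT PS) := by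
          apply mul_le_mul_of_nonneg_left _ hC0
          exact d1_shift PT PS
            (fun p => tvLoss P γ πE πhatE π p + tvLoss P γ πE πhatE πE p)
            (fun p => add_nonneg (hf0 p) (hg0 p))
            (fun p => by
              show tvLoss P γ πE πhatE π p + tvLoss P γ πE πhatE πE p ≤ 2
              linarith [hf1 p, hg1 p])
      _ ≤ (2 * Rmax / (1 - γ) ^ 2) *
            ((1 / (m : ℝ)) * (∑ i, tvLoss P γ πE πhatE π (ω i)) +
              (∑ p : S × G, PS p * tvLoss P γ πE πhatE πE p) + d1 PT PS + t) := by
          apply mul_le_mul_of_nonneg_left _ hC0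
          have hsplit : ∑ p : S × G,
              PS p * (tvLoss P γ πE πhatE π p + tvLoss P γ πE πhatE πE p)
              = (∑ p : S × G, PS p * tvLoss P γ πE πhatE π p)
                + ∑ p : S × G, PS p * tvLoss P γ πE πhatE πE p := by
            rw [← Finset.sum_add_distrib]
            exact Finset.sum_congr rfl fun p _ => by ring
          linarith
  -- Probability part
  have hW0 : ∀ ω : Fin m → S × G, 0 ≤ ∏ i, PS (ω i) :=
    fun ω => Finset.prod_nonneg fun i _ => hPS.1 (ω i)
  have hWsum : ∑ ω : Fin m → S × G, ∏ i, PS (ω i) = 1 := by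
    have h := Finset.prod_univ_sum (fun _ : Fin m => (Finset.univ : Finset (S × G)))
      (fun _ p => PS p)
    rw [Fintype.piFinset_univ] at h
    rw [← h]
    simp [hPS.2]
  -- arithmetic: failure of the good event implies the Chernoff event
  have harith : ∀ ω : Fin m → S × G,
      ¬ (∑ p : S × G, PS p * tvLoss P γ πE πhatE π p
          ≤ (1 / (m : ℝ)) * (∑ i, tvLoss P γ πE πhatE π (ω i)) + t) →
      (m : ℝ) * t ≤ ∑ i : Fin m,
        ((∑ p : S × G, PS p * tvLoss P γ πE πhatE π p) - tvLoss P γ πE πhatE π (ω i)) := by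
    intro ω h
    push_neg at h
    have hsum : ∑ i : Fin m,
        ((∑ p : S × G, PS p * tvLoss P γ πE πhatE π p) - tvLoss P γ πE πhatE π (ω i))
        = (m : ℝ) * (∑ p : S × G, PS p * tvLoss P γ πE πhatE π p)
          - ∑ i, tvLoss P γ πE πhatE π (ω i) := by
      rw [Finset.sum_sub_distrib, Finset.sum_const, Finset.card_univ, Fintype.card_fin,
        nsmul_eq_mul]
    rw [hsum]
    have hmul := mul_lt_mul_of_pos_left h hm'
    have hcanc : (m:ℝ) * ((1 / (m : ℝ)) * (∑ i, tvLoss P γ πE πhatE π (ω i)) + t)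
        = (∑ i, tvLoss P γ πE πhatE π (ω i)) + (m:ℝ) * t := by
      rw [mul_add, ← mul_assoc, mul_one_div, div_self (ne_of_gt hm'), one_mul]
    rw [hcanc] at hmul
    linarith
  -- the Chernoff bound
  have hcher := chernoff PS (fun p => tvLoss P γ πE πhatE π p) hPS.1 hPS.2 hf0 hf1 m ht0
  -- exponential bound by δ
  have hcard : (1:ℝ) ≤ (Hyp.card : ℝ) := by
    have : 1 ≤ Hyp.card := Finset.card_pos.mpr ⟨π, hπHyp⟩
    exact_mod_cast this
  have hL1 : 0 ≤ Real.log (2 * (Hyp.card : ℝ)) := Real.log_nonneg (by linarith)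
  have hL2 : 0 ≤ Real.log (1 / δ) := Real.log_nonneg ((le_div_iff₀ hδ0).mpr (by linarith))
  have ht2 : t ^ 2 = (Real.log (2 * (Hyp.card : ℝ)) + Real.log (1 / δ)) / (2 * m) := by
    rw [htdef, Real.sq_sqrt (div_nonneg (by linarith) (by positivity))]
  have harg : 2 * (m : ℝ) * t ^ 2 = Real.log (2 * (Hyp.card : ℝ)) + Real.log (1 / δ) := by
    rw [ht2]
    field_simp
  have hexp : Real.exp (-(2 * (m : ℝ) * t ^ 2)) ≤ δ := by
    rw [harg, show -(Real.log (2 * (Hyp.card : ℝ)) + Real.log (1 / δ))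
        = -Real.log (2 * (Hyp.card : ℝ)) + -Real.log (1 / δ) by ring, Real.exp_add]
    have e1 : Real.exp (-Real.log (2 * (Hyp.card : ℝ))) = (2 * (Hyp.card : ℝ))⁻¹ := by
      rw [Real.exp_neg, Real.exp_log (by linarith)]
    have e2 : Real.exp (-Real.log (1 / δ)) = δ := by
      rw [Real.exp_neg, Real.exp_log (by positivity), one_div, inv_inv]
    rw [e1, e2]
    have hinv : (2 * (Hyp.card : ℝ))⁻¹ ≤ 1 := by
      rw [← one_div, div_le_one (by linarith)]
      linarith
    calc (2 * (Hyp.card : ℝ))⁻¹ * δ ≤ 1 * δ :=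
          mul_le_mul_of_nonneg_right hinv hδ0.le
      _ = δ := one_mul δ
  -- probability of the bad event
  have hbadle : (∑ ω : Fin m → S × G,
      if ¬ (∑ p : S × G, PS p * tvLoss P γ πE πhatE π p
          ≤ (1 / (m : ℝ)) * (∑ i, tvLoss P γ πE πhatE π (ω i)) + t)
      then ∏ i, PS (ω i) else 0) ≤ δ := by
    refine le_trans (le_trans ?_ hcher) hexp
    apply Finset.sum_le_sum
    intro ω _
    by_cases h1 : (∑ p : S × G, PS p * tvLoss P γ πE πhatE π p
        ≤ (1 / (m : ℝ)) * (∑ i, tvLoss P γ πE πhatE π (ω i)) + t)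
    · rw [if_neg (not_not_intro h1)]
      split_ifs
      · exact hW0 ω
      · exact le_refl 0
    · rw [if_pos h1, if_pos (harith ω h1)]
  -- probability of the good event
  have hgoodge : 1 - δ ≤ ∑ ω : Fin m → S × G,
      if (∑ p : S × G, PS p * tvLoss P γ πE πhatE π p
          ≤ (1 / (m : ℝ)) * (∑ i, tvLoss P γ πE πhatE π (ω i)) + t)
      then ∏ i, PS (ω i) else 0 := by
    have hdecomp : (∑ ω : Fin m → S × G,
        if (∑ p : S × G, PS p * tvLoss P γ πE πhatE π p
            ≤ (1 / (m : ℝ)) * (∑ i, tvLoss P γ πE πhatE π (ω i)) + t)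
        then ∏ i, PS (ω i) else 0)
        + (∑ ω : Fin m → S × G,
        if ¬ (∑ p : S × G, PS p * tvLoss P γ πE πhatE π p
            ≤ (1 / (m : ℝ)) * (∑ i, tvLoss P γ πE πhatE π (ω i)) + t)
        then ∏ i, PS (ω i) else 0) = 1 := by
      rw [← Finset.sum_add_distrib]
      rw [Finset.sum_congr rfl fun ω _ => by
        by_cases h : (∑ p : S × G, PS p * tvLoss P γ πE πhatE π p
            ≤ (1 / (m : ℝ)) * (∑ i, tvLoss P γ πE πhatE π (ω i)) + t)
        · rw [if_pos h, if_neg (not_not_intro h), add_zero]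
        · rw [if_neg h, if_pos h, zero_add]]
      exact hWsum
    linarith
  -- conclusion
  apply le_trans hgoodge
  apply Finset.sum_le_sum
  intro ω _
  by_cases h1 : (∑ p : S × G, PS p * tvLoss P γ πE πhatE π p
      ≤ (1 / (m : ℝ)) * (∑ i, tvLoss P γ πE πhatE π (ω i)) + t)
  · rw [if_pos h1, if_pos (hdet ω h1)]
  · rw [if_neg h1]
    split_ifs
    · exact hW0 ω
    · exact le_refl 0
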